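/- Let (X_i)_{i≥1} be a sequence of independent and identically distributed nonnegative real random variables with E[X₁²] < ∞, and let S_m = X₁ + ⋯ + X_m. Then for every ε ∈ (0, E[X₁]), every c > 0, and every m ≥ 1, E[log₂(1 + c·S_m²)] ≥ log₂(1 + c·m²·(E[X₁])²) − δ_m, where δ_m = (E[X₁²]/(m·ε²))·log₂(1 + c·m²·(E[X₁] − ε)²) − log₂(1 − c·m²·ε·(2·E[X₁] − ε)/(1 + c·m²·(E[X₁])²)). -/

import Mathlib

open MeasureTheory ProbabilityTheory Real

set_option maxHeartbeats 1000000 in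
/-- Law-of-large-numbers lower bound: for i.i.d. nonnegative `X_i` with finite second
moment, `E[log₂(1 + c S_m²)] ≥ log₂(1 + c m² E[X₁]²) − δ_m`. -/
theorem lln_log_lower_bound {Ω : Type*} [MeasurableSpace Ω] (μ : Measure Ω)
    [IsProbabilityMeasure μ] (X : ℕ → Ω → ℝ)
    (hmeas : ∀ i, Measurable (X i))
    (hnonneg : ∀ i ω, 0 ≤ X i ω)
    (hindep : iIndepFun X μ)
    (hident : ∀ i, IdentDistrib (X i) (X 0) μ μ)
    (hL2 : Integrable (fun ω => (X 0 ω) ^ 2) μ)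
    (ε : ℝ) (hε : 0 < ε) (hε' : ε < ∫ ω, X 0 ω ∂μ)
    (c : ℝ) (hc : 0 < c) (m : ℕ) (hm : 1 ≤ m) :
    (∫ ω, Real.logb 2 (1 + c * (∑ i ∈ Finset.range m, X i ω) ^ 2) ∂μ) ≥
      Real.logb 2 (1 + c * (m : ℝ) ^ 2 * (∫ ω, X 0 ω ∂μ) ^ 2) -
        ((∫ ω, (X 0 ω) ^ 2 ∂μ) / ((m : ℝ) * ε ^ 2) *
            Real.logb 2 (1 + c * (m : ℝ) ^ 2 * ((∫ ω, X 0 ω ∂μ) - ε) ^ 2) -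
          Real.logb 2
            (1 - c * (m : ℝ) ^ 2 * ε * (2 * (∫ ω, X 0 ω ∂μ) - ε) /
              (1 + c * (m : ℝ) ^ 2 * (∫ ω, X 0 ω ∂μ) ^ 2))) := by
  have hm0 : (0:ℝ) < m := by exact_mod_cast hm
  set μ1 : ℝ := ∫ ω, X 0 ω ∂μ with hμ1def
  set σ2 : ℝ := ∫ ω, (X 0 ω) ^ 2 ∂μ with hσ2def
  have hσ2nonneg : 0 ≤ σ2 := integral_nonneg fun ω => sq_nonneg _
  set p : ℝ := σ2 / ((m:ℝ) * ε ^ 2) with hpdef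
  have hppos : 0 ≤ p := div_nonneg hσ2nonneg (by positivity)
  set L : ℝ := Real.logb 2 (1 + c * (m:ℝ) ^ 2 * (μ1 - ε) ^ 2) with hLdef
  have hLnonneg : 0 ≤ L := Real.logb_nonneg one_lt_two (by nlinarith [mul_nonneg (mul_nonneg hc.le (sq_nonneg (m:ℝ))) (sq_nonneg (μ1 - ε))])
  -- Memℒp facts
  have hmem0 : MemLp (X 0) 2 μ :=
    (memLp_two_iff_integrable_sq (hmeas 0).aestronglyMeasurable).2 hL2
  have hmemi : ∀ i, MemLp (X i) 2 μ := fun i => (hident i).memLp_iff.2 hmem0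
  have hinti : ∀ i, Integrable (X i) μ := fun i => (hmemi i).integrable one_le_two
  -- S and its properties
  set S : Ω → ℝ := fun ω => ∑ i ∈ Finset.range m, X i ω with hSdef
  have hSfun : S = ∑ i ∈ Finset.range m, X i := by
    ext ω; simp [hSdef, Finset.sum_apply]
  have hSmeas : Measurable S := Finset.measurable_sum _ fun i _ => hmeas i
  have hSint : Integrable S μ := integrable_finset_sum _ fun i _ => hinti i
  have hSmem : MemLp S 2 μ := by
    rw [hSfun]; exact memLp_finset_sum' _ fun i _ => hmemi i
  have hES : ∫ ω, S ω ∂μ = m * μ1 := by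
    rw [hSdef, integral_finset_sum _ fun i _ => hinti i]
    simp [(fun i => (hident i).integral_eq : ∀ i, ∫ ω, X i ω ∂μ = μ1)]
    exact Or.inl rfl
  -- variance bound
  have hvar : variance S μ ≤ m * σ2 := by
    rw [hSfun, IndepFun.variance_sum (fun i _ => hmemi i)
      (fun i _ j _ hij => hindep.indepFun hij)]
    calc ∑ i ∈ Finset.range m, variance (X i) μ
        = ∑ i ∈ Finset.range m, variance (X 0) μ := by
          exact Finset.sum_congr rfl fun i _ => (hident i).variance_eq
      _ = m * variance (X 0) μ := by simp [mul_comm]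
      _ ≤ m * σ2 := by
          have := variance_le_expectation_sq (μ := μ) (hmeas 0).aestronglyMeasurable
          have h2 : (μ[(X 0) ^ 2] : ℝ) = σ2 := by rfl
          nlinarith
  -- Chebyshev
  set A : Set Ω := {ω | (m:ℝ) * (μ1 - ε) ≤ S ω} with hAdef
  have hAmeas : MeasurableSet A := measurableSet_le measurable_const hSmeas
  have hcompl : μ Aᶜ ≤ ENNReal.ofReal p := by
    have hsub : Aᶜ ⊆ {ω | (m:ℝ) * ε ≤ |S ω - μ[S]| } := by
      intro ω hω
      simp only [hAdef, Set.mem_compl_iff, Set.mem_setOf_eq, not_le] at hω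
      have hES' : (μ[S] : ℝ) = m * μ1 := hES
      simp only [Set.mem_setOf_eq, hES']
      rw [abs_sub_comm, abs_of_nonneg (by nlinarith)]
      nlinarith
    calc μ Aᶜ ≤ μ {ω | (m:ℝ) * ε ≤ |S ω - μ[S]| } := measure_mono hsub
      _ ≤ ENNReal.ofReal (variance S μ / ((m:ℝ)*ε)^2) :=
          meas_ge_le_variance_div_sq hSmem (by positivity)
      _ ≤ ENNReal.ofReal p := by
          apply ENNReal.ofReal_le_ofReal
          rw [hpdef]
          rw [div_le_div_iff₀ (by positivity) (by positivity)]
          nlinarith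
  have hAreal : 1 - p ≤ (μ A).toReal := by
    have h1 : (μ Aᶜ).toReal ≤ p :=
      ENNReal.toReal_le_of_le_ofReal hppos hcompl
    have h2 : (μ A).toReal = 1 - (μ Aᶜ).toReal := by
      rw [measure_compl hAmeas (measure_ne_top μ A)]
      rw [ENNReal.toReal_sub_of_le (measure_mono (Set.subset_univ A)) (measure_ne_top μ _)]
      simp
    linarith
  -- integrand f
  set f : Ω → ℝ := fun ω => Real.logb 2 (1 + c * S ω ^ 2) with hfdef
  have hfnonneg : ∀ ω, 0 ≤ f ω := fun ω =>
    Real.logb_nonneg one_lt_two (by nlinarith [sq_nonneg (S ω)])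
  have hfmeas : Measurable f := by
    apply Measurable.div _ measurable_const
    exact (measurable_const.add ((hSmeas.pow_const 2).const_mul c)).log
  have hfint : Integrable f μ := by
    have hg : Integrable (fun ω => (c / Real.log 2) * S ω ^ 2) μ :=
      (hSmem.integrable_sq).const_mul _
    refine hg.mono hfmeas.aestronglyMeasurable (Filter.Eventually.of_forall fun ω => ?_)
    have h1 : 0 < 1 + c * S ω ^ 2 := by nlinarith [sq_nonneg (S ω)]
    rw [Real.norm_eq_abs, abs_of_nonneg (hfnonneg ω), Real.norm_eq_abs]
    have hlog : Real.log (1 + c * S ω ^ 2) ≤ c * S ω ^ 2 := by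
      have := Real.log_le_sub_one_of_pos h1
      linarith
    have hlog2 : (0:ℝ) < Real.log 2 := Real.log_pos one_lt_two
    rw [hfdef]
    simp only [Real.logb]
    rw [div_le_iff₀ hlog2, abs_of_nonneg (by positivity : (0:ℝ) ≤ c / Real.log 2 * S ω ^ 2)]
    rw [div_mul_eq_mul_div, div_mul_cancel₀ _ hlog2.ne']
    exact hlog
  -- lower bound ∫ f ≥ L * μ(A).toReal
  have hkey : L * (μ A).toReal ≤ ∫ ω, f ω ∂μ := by
    have hind : Integrable (A.indicator fun _ => L) μ :=
      (integrable_const L).indicator hAmeas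
    have hle : ∀ ω, A.indicator (fun _ => L) ω ≤ f ω := by
      intro ω
      by_cases hω : ω ∈ A
      · rw [Set.indicator_of_mem hω]
        apply Real.logb_le_logb_of_le one_lt_two (by positivity)
        have h1 : (m:ℝ) * (μ1 - ε) ≤ S ω := hω
        have h0 : (0:ℝ) ≤ (m:ℝ) * (μ1 - ε) := mul_nonneg hm0.le (by linarith)
        have hsq : ((m:ℝ) * (μ1 - ε))^2 ≤ S ω ^ 2 := pow_le_pow_left₀ h0 h1 2
        rw [mul_pow] at hsq
        have h3 := mul_le_mul_of_nonneg_left hsq hc.le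
        calc 1 + c * (m:ℝ)^2 * (μ1 - ε)^2 = 1 + c * ((m:ℝ)^2 * (μ1 - ε)^2) := by ring
          _ ≤ 1 + c * S ω ^ 2 := by linarith
      · rw [Set.indicator_of_notMem hω]; exact hfnonneg ω
    calc L * (μ A).toReal = ∫ ω, A.indicator (fun _ => L) ω ∂μ := by
          rw [integral_indicator_const _ hAmeas]; simp [mul_comm]
          exact Or.inl rfl
      _ ≤ ∫ ω, f ω ∂μ := integral_mono hind hfint hle
  -- combine
  have hineq : L * (1 - p) ≤ ∫ ω, f ω ∂μ := by
    calc L * (1 - p) ≤ L * (μ A).toReal := by nlinarith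
      _ ≤ _ := hkey
  -- algebraic identity: RHS = (1 - p) * L
  have hD : (0:ℝ) < 1 + c * (m:ℝ)^2 * μ1^2 := by positivity
  have harg : (0:ℝ) < 1 + c * (m:ℝ)^2 * (μ1 - ε)^2 := by positivity
  have hqeq : 1 - c * (m:ℝ)^2 * ε * (2 * μ1 - ε) / (1 + c * (m:ℝ)^2 * μ1^2)
      = (1 + c * (m:ℝ)^2 * (μ1 - ε)^2) / (1 + c * (m:ℝ)^2 * μ1^2) := by
    field_simp
    ring
  have hlogid : Real.logb 2 (1 + c * (m:ℝ)^2 * μ1^2)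
      + Real.logb 2 (1 - c * (m:ℝ)^2 * ε * (2 * μ1 - ε) / (1 + c * (m:ℝ)^2 * μ1^2)) = L := by
    rw [hqeq, Real.logb_div harg.ne' hD.ne', hLdef]
    ring
  have hgoal : (∫ ω, Real.logb 2 (1 + c * (∑ i ∈ Finset.range m, X i ω) ^ 2) ∂μ)
      = ∫ ω, f ω ∂μ := rfl
  rw [ge_iff_le, hgoal]
  linarith [hineq, hlogid]
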